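/- Equivalence of the max-min attacker–defender problem and the single-level MILP: let K ∈ ℕ and Z = { z : J → ℝ : z j ∈ {0,1} for all j and ∑_j z j ≤ K }, and fix big-M constants M : J → ℝ. Assume that for every z ∈ Z the set S(z) is nonempty and there exists a dual-feasible tuple maximizing D_z whose π-component satisfies π j ≤ M j for all j. Then sup over z ∈ Z of (minimum of f over S(z)) equals the supremum, over all (z, g, π, μ, σ, η, τ, ν) with z ∈ Z, (π, μ, σ, η, τ, ν) dual-feasible, and g : J → ℝ satisfying g j ≤ M j * (1 − z j), g j ≤ π j, g j ≥ 0, and g j ≥ π j − M j * z j for all j, of the MILP objective −∑_j C j * g j + ∑_i λ i * μ i − ∑_{i,j} C j * a i j * σ i j − β * ∑_{i < i'} (η i i' + τ i i') − θ * ∑_i ν i; moreover both suprema are attained. -/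

import Mathlib

open Finset

variable {m n : ℕ}

/-- The defender's feasible set `S(z)` given the attack vector `z`. -/
def Feas (lam : Fin m → ℝ) (C : Fin n → ℝ) (a : Fin m → Fin n → ℝ)
    (θ β : ℝ) (z : Fin n → ℝ) : Set ((Fin m → Fin n → ℝ) × (Fin m → ℝ)) :=
  {p | (∀ i j, 0 ≤ p.1 i j) ∧ (∀ i, 0 ≤ p.2 i) ∧
       (∀ j, ∑ i, p.1 i j ≤ C j * (1 - z j)) ∧
       (∀ i, (∑ j, p.1 i j) + p.2 i = lam i) ∧
       (∀ i j, p.1 i j ≤ C j * a i j) ∧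
       (∀ i, p.2 i / lam i ≤ θ) ∧
       (∀ i i', |p.2 i / lam i - p.2 i' / lam i'| ≤ β)}

/-- The defender's cost `f(x, q)`. -/
def cost (d : Fin m → Fin n → ℝ) (φ : Fin m → ℝ) (γ : ℝ)
    (p : (Fin m → Fin n → ℝ) × (Fin m → ℝ)) : ℝ :=
  (1 - γ) * ∑ i, φ i * p.2 i + γ * ∑ i, ∑ j, d i j * p.1 i j

/-- Dual feasibility of the tuple `(π, μ, σ, η, τ, ν)`. -/
def DualFeasible (lam : Fin m → ℝ) (d : Fin m → Fin n → ℝ) (φ : Fin m → ℝ) (γ : ℝ)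
    (π : Fin n → ℝ) (μ : Fin m → ℝ) (σ : Fin m → Fin n → ℝ)
    (η τ : Fin m → Fin m → ℝ) (ν : Fin m → ℝ) : Prop :=
  (∀ j, 0 ≤ π j) ∧ (∀ i j, 0 ≤ σ i j) ∧ (∀ i, 0 ≤ ν i) ∧
  (∀ i i' : Fin m, i < i' → 0 ≤ η i i') ∧ (∀ i i' : Fin m, i < i' → 0 ≤ τ i i') ∧
  (∀ i j, -π j + μ i - σ i j ≤ γ * d i j) ∧
  (∀ i, μ i - (1 / lam i) * (∑ l ∈ univ.filter (fun l => i < l), (η i l - τ i l))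
      + (1 / lam i) * (∑ l ∈ univ.filter (fun l => l < i), (η l i - τ l i))
      - ν i / lam i ≤ (1 - γ) * φ i)

/-- The dual objective `D_z(π, μ, σ, η, τ, ν)`. -/
def Dobj (lam : Fin m → ℝ) (C : Fin n → ℝ) (a : Fin m → Fin n → ℝ)
    (θ β : ℝ) (z : Fin n → ℝ)
    (π : Fin n → ℝ) (μ : Fin m → ℝ) (σ : Fin m → Fin n → ℝ)
    (η τ : Fin m → Fin m → ℝ) (ν : Fin m → ℝ) : ℝ :=
  -(∑ j, C j * (1 - z j) * π j) + ∑ i, lam i * μ i - ∑ i, ∑ j, C j * a i j * σ i j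
    - β * ∑ i, ∑ i' ∈ univ.filter (fun i' => i < i'), (η i i' + τ i i')
    - θ * ∑ i, ν i

set_option linter.unusedSectionVars false
set_option linter.unusedVariables false
set_option maxHeartbeats 1000000

section Farkas
variable {κ ι : Type*} [Fintype κ] [Fintype ι]


section Farkas
variable {κ ι : Type*} [Fintype κ] [Fintype ι]

lemma cone_carath [DecidableEq ι] (v : ι → EuclideanSpace ℝ κ) (s : Finset ι) :
    ∀ c : ι → ℝ, (∀ i, 0 ≤ c i) → (∀ i ∉ s, c i = 0) →
    ∃ (t : Finset ι) (c' : ι → ℝ), LinearIndependent ℝ (fun i : t => v i) ∧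
      (∀ i, 0 ≤ c' i) ∧ (∀ i ∉ t, c' i = 0) ∧ ∑ i, c' i • v i = ∑ i, c i • v i := by
  induction s using Finset.strongInduction with
  | _ s ih =>
    intro c hc hsupp
    by_cases hli : LinearIndependent ℝ (fun i : s => v i)
    · exact ⟨s, c, hli, hc, hsupp, rfl⟩
    · rw [Fintype.linearIndependent_iff] at hli
      push_neg at hli
      obtain ⟨g0, hg0sum, i1, hi1⟩ := hli
      -- extend g0 to ι
      have key : ∀ g : ι → ℝ, (∀ i ∉ s, g i = 0) → (∑ i, g i • v i = 0) →
          (∃ i ∈ s, 0 < g i) →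
          ∃ (t : Finset ι) (c' : ι → ℝ), LinearIndependent ℝ (fun i : t => v i) ∧
            (∀ i, 0 ≤ c' i) ∧ (∀ i ∉ t, c' i = 0) ∧ ∑ i, c' i • v i = ∑ i, c i • v i := by
        intro g hgsupp hgsum hgpos
        set P : Finset ι := s.filter (fun i => 0 < g i) with hP
        have hPne : P.Nonempty := by
          obtain ⟨i, his, hgi⟩ := hgpos
          exact ⟨i, by simp [hP, his, hgi]⟩
        obtain ⟨i₀, hi₀P, hi₀min⟩ := Finset.exists_min_image P (fun i => c i / g i) hPne
        have hi₀s : i₀ ∈ s := (Finset.mem_filter.1 hi₀P).1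
        have hgi₀ : 0 < g i₀ := (Finset.mem_filter.1 hi₀P).2
        set tmin : ℝ := c i₀ / g i₀ with htmin
        have htnn : 0 ≤ tmin := div_nonneg (hc i₀) hgi₀.le
        set c'' : ι → ℝ := fun i => c i - tmin * g i with hc''
        have hc''nn : ∀ i, 0 ≤ c'' i := by
          intro i
          by_cases hgi : 0 < g i
          · have his : i ∈ P := by
              refine Finset.mem_filter.2 ⟨?_, hgi⟩
              by_contra hns
              exact absurd (hgsupp i hns) (by positivity)
            have := hi₀min i his
            have : tmin * g i ≤ c i := by
              rw [htmin]
              calc c i₀ / g i₀ * g i ≤ c i / g i * g i := by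
                    exact mul_le_mul_of_nonneg_right this hgi.le
                _ = c i := div_mul_cancel₀ _ hgi.ne'
            simpa [hc''] using sub_nonneg.2 this
          · push_neg at hgi
            have : tmin * g i ≤ 0 := mul_nonpos_of_nonneg_of_nonpos htnn hgi
            have := sub_nonneg.2 (this.trans (hc i))
            simpa [hc''] using by linarith [hc i, this]
        have hc''supp : ∀ i ∉ s.erase i₀, c'' i = 0 := by
          intro i hi
          by_cases hii : i = i₀
          · subst hii; simp [hc'', htmin, div_mul_cancel₀ _ hgi₀.ne']
          · have hns : i ∉ s := fun hmem => hi (Finset.mem_erase.2 ⟨hii, hmem⟩)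
            simp [hc'', hgsupp i hns, hsupp i hns]
        have hsum : ∑ i, c'' i • v i = ∑ i, c i • v i := by
          simp only [hc'', sub_smul, Finset.sum_sub_distrib, mul_smul]
          rw [← Finset.smul_sum, hgsum, smul_zero, sub_zero]
        obtain ⟨t, cf, h1, h2, h3, h4⟩ := ih (s.erase i₀) (Finset.erase_ssubset hi₀s) c'' hc''nn hc''supp
        exact ⟨t, cf, h1, h2, h3, h4.trans hsum⟩
      -- the extended dependency vector
      set g : ι → ℝ := fun i => if h : i ∈ s then g0 ⟨i, h⟩ else 0 with hg
      have hgsupp : ∀ i ∉ s, g i = 0 := fun i hi => by simp [hg, hi]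
      have hgsum : ∑ i, g i • v i = 0 := by
        rw [← Finset.sum_subset (Finset.subset_univ s)
          (fun i _ hi => by simp [hgsupp i hi])]
        rw [← Finset.sum_attach s (fun i => g i • v i)]
        simpa [hg] using hg0sum
      have hgne : g (i1 : ι) ≠ 0 := by simp [hg, i1.2, hi1]
      by_cases hpos : ∃ i ∈ s, 0 < g i
      · exact key g hgsupp hgsum hpos
      · push_neg at hpos
        refine key (-g) (fun i hi => by simp [hgsupp i hi]) (by simpa using hgsum) ?_
        refine ⟨i1, i1.2, ?_⟩
        have := hpos i1 i1.2
        simpa using lt_of_le_of_ne this hgne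

lemma cone_isClosed (v : ι → EuclideanSpace ℝ κ) :
    IsClosed {w : EuclideanSpace ℝ κ | ∃ c : ι → ℝ, (∀ i, 0 ≤ c i) ∧ ∑ i, c i • v i = w} := by
  classical
  have hrw : {w : EuclideanSpace ℝ κ | ∃ c : ι → ℝ, (∀ i, 0 ≤ c i) ∧ ∑ i, c i • v i = w}
      = ⋃ t : {t : Finset ι // LinearIndependent ℝ (fun i : t => v i)},
        {w : EuclideanSpace ℝ κ | ∃ c : ι → ℝ, (∀ i, 0 ≤ c i) ∧ (∀ i ∉ t.1, c i = 0)
          ∧ ∑ i, c i • v i = w} := by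
    ext w
    constructor
    · rintro ⟨c, hc, rfl⟩
      obtain ⟨t, c', hli, h1, h2, h3⟩ := cone_carath v Finset.univ c hc (by simp)
      exact Set.mem_iUnion.2 ⟨⟨t, hli⟩, c', h1, h2, h3⟩
    · rintro h
      obtain ⟨t, c, h1, _, h3⟩ := Set.mem_iUnion.1 h
      exact ⟨c, h1, h3⟩
  rw [hrw]
  refine isClosed_iUnion_of_finite fun t => ?_
  obtain ⟨t, hli⟩ := t
  set T : ({i // i ∈ t} → ℝ) →ₗ[ℝ] EuclideanSpace ℝ κ :=
    { toFun := fun c => ∑ i : {i // i ∈ t}, c i • v i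
      map_add' := by
        intro c₁ c₂
        simp [add_smul, Finset.sum_add_distrib]
      map_smul' := by
        intro r c
        simp [smul_smul, Finset.smul_sum] } with hT
  have hker : LinearMap.ker T = ⊥ := by
    rw [LinearMap.ker_eq_bot']
    intro c hc
    have := (Fintype.linearIndependent_iff.1 hli) c hc
    funext i
    exact this i
  have hemb := LinearMap.isClosedEmbedding_of_injective (f := T) hker
  have himg : {w : EuclideanSpace ℝ κ | ∃ c : ι → ℝ, (∀ i, 0 ≤ c i) ∧ (∀ i ∉ t, c i = 0)
      ∧ ∑ i, c i • v i = w} = T '' {c | ∀ i, 0 ≤ c i} := by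
    ext w
    constructor
    · rintro ⟨c, hc, hcsupp, rfl⟩
      refine ⟨fun i => c i, fun i => hc i, ?_⟩
      show ∑ i : {i // i ∈ t}, c i • v i = _
      rw [Finset.sum_coe_sort t (fun i => c i • v i)]
      exact (Finset.sum_subset (Finset.subset_univ t)
        (fun i _ hi => by simp [hcsupp i hi]))
    · rintro ⟨c0, hc0, rfl⟩
      refine ⟨fun i => if h : i ∈ t then c0 ⟨i, h⟩ else 0, ?_, ?_, ?_⟩
      · intro i; by_cases h : i ∈ t <;> simp [h, hc0 _]
      · intro i hi; simp [hi]
      · show _ = ∑ i : {i // i ∈ t}, c0 i • v i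
        rw [← Finset.sum_subset (Finset.subset_univ t)
          (fun i _ hi => by simp [hi])]
        rw [← Finset.sum_coe_sort t (fun i => (if h : i ∈ t then c0 ⟨i, h⟩ else 0) • v i)]
        apply Finset.sum_congr rfl
        intro i _
        simp [i.2]
  rw [himg]
  refine hemb.isClosedMap _ ?_
  have : {c : {i // i ∈ t} → ℝ | ∀ i, 0 ≤ c i} = ⋂ i, {c | 0 ≤ c i} := by
    ext c; simp [Set.mem_iInter]
  rw [this]
  exact isClosed_iInter fun i => isClosed_le continuous_const (continuous_apply i)

lemma farkas_eq (v : ι → EuclideanSpace ℝ κ) (b : EuclideanSpace ℝ κ)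
    (h : ¬ ∃ c : ι → ℝ, (∀ i, 0 ≤ c i) ∧ ∑ i, c i • v i = b) :
    ∃ y : κ → ℝ, (∀ i, (0:ℝ) ≤ ∑ k, v i k * y k) ∧ ∑ k, y k * b k < 0 := by
  classical
  set K : ConvexCone ℝ (EuclideanSpace ℝ κ) :=
    { carrier := {w | ∃ c : ι → ℝ, (∀ i, 0 ≤ c i) ∧ ∑ i, c i • v i = w}
      smul_mem' := by
        rintro r hr w ⟨c, hc, rfl⟩
        exact ⟨fun i => r * c i, fun i => mul_nonneg hr.le (hc i),
          by simp [mul_smul, Finset.smul_sum]⟩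
      add_mem' := by
        rintro w₁ ⟨c₁, hc₁, rfl⟩ w₂ ⟨c₂, hc₂, rfl⟩
        exact ⟨fun i => c₁ i + c₂ i, fun i => add_nonneg (hc₁ i) (hc₂ i),
          by simp [add_smul, Finset.sum_add_distrib]⟩ } with hK
  have hne : (K : Set (EuclideanSpace ℝ κ)).Nonempty :=
    ⟨0, ⟨fun _ => 0, fun _ => le_refl 0, by simp⟩⟩
  have hcl : IsClosed (K : Set (EuclideanSpace ℝ κ)) := cone_isClosed v
  have hbnm : b ∉ K := h
  obtain ⟨y, hy1, hy2⟩ :=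
    ProperCone.hyperplane_separation'
      ({ carrier := K, add_mem' := fun hx hy => K.add_mem hx hy,
         zero_mem' := ⟨fun _ => 0, fun _ => le_refl 0, by simp⟩,
         smul_mem' := fun c x hx => by
           rcases eq_or_lt_of_le c.2 with hc | hc
           · have : c = 0 := NNReal.coe_eq_zero.1 hc.symm
             subst this; rw [zero_smul]; exact ⟨fun _ => 0, fun _ => le_refl 0, by simp⟩
           · exact K.smul_mem hc hx,
         isClosed' := hcl } : ProperCone ℝ (EuclideanSpace ℝ κ)) (x₀ := b) hbnm
  refine ⟨fun k => y k, ?_, ?_⟩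
  · intro i
    have hvi : v i ∈ K := by
      refine ⟨fun j => if j = i then 1 else 0, fun j => by positivity, ?_⟩
      simp [ite_smul]
    have := hy1 (v i) hvi
    rw [PiLp.inner_apply] at this; simpa [mul_comm] using this
    
  · have := hy2
    rw [PiLp.inner_apply] at this; simpa [mul_comm] using this

lemma farkas_ineq (A : κ → ι → ℝ) (b : κ → ℝ)
    (h : ¬ ∃ x : ι → ℝ, ∀ k, ∑ i, A k i * x i ≤ b k) :
    ∃ y : κ → ℝ, (∀ k, 0 ≤ y k) ∧ (∀ i, ∑ k, y k * A k i = 0) ∧ ∑ k, y k * b k < 0 := by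
  classical
  set v : (ι ⊕ ι) ⊕ κ → EuclideanSpace ℝ κ := fun r =>
    Sum.elim (Sum.elim (fun i => WithLp.toLp 2 (fun k => A k i))
      (fun i => WithLp.toLp 2 (fun k => -A k i)))
      (fun k0 => WithLp.toLp 2 (fun k => if k = k0 then (1:ℝ) else 0)) r with hv
  have hnc : ¬ ∃ c : (ι ⊕ ι) ⊕ κ → ℝ, (∀ r, 0 ≤ c r) ∧
      ∑ r, c r • v r = WithLp.toLp 2 b := by
    rintro ⟨c, hc, hsum⟩
    refine h ⟨fun i => c (.inl (.inl i)) - c (.inl (.inr i)), fun k => ?_⟩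
    have hk : (∑ r, c r • v r) k = b k := by rw [hsum]
    have hexp : (∑ r, c r • v r) k = ∑ r, c r * v r k := by
      rw [WithLp.ofLp_sum, Finset.sum_apply]
      simp [PiLp.smul_apply, smul_eq_mul]
    rw [hexp] at hk
    rw [Fintype.sum_sum_type] at hk
    rw [Fintype.sum_sum_type] at hk
    simp only [hv, Sum.elim_inl, Sum.elim_inr] at hk
    have hlast : ∑ k0 : κ, c (.inr k0) * (if k = k0 then 1 else 0) = c (.inr k) := by
      simp [mul_ite]
    rw [hlast] at hk
    have : ∑ i, A k i * (c (.inl (.inl i)) - c (.inl (.inr i)))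
        = b k - c (.inr k) := by
      rw [Finset.sum_congr rfl (fun i _ => by ring :
        ∀ i ∈ Finset.univ, A k i * (c (.inl (.inl i)) - c (.inl (.inr i)))
          = c (.inl (.inl i)) * A k i + c (.inl (.inr i)) * (-A k i))]
      rw [Finset.sum_add_distrib]
      linarith [hk]
    rw [this]
    linarith [hc (.inr k)]
  obtain ⟨y, hy1, hy2⟩ := farkas_eq v (WithLp.toLp 2 b) hnc
  refine ⟨y, ?_, ?_, hy2⟩
  · intro k0
    have := hy1 (.inr k0)
    simpa [hv, ite_mul] using this
  · intro i
    have h1 := hy1 (.inl (.inl i))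
    have h2 := hy1 (.inl (.inr i))
    simp only [hv, Sum.elim_inl, Sum.elim_inr] at h1 h2
    have h2' : ∑ k, A k i * y k ≤ 0 := by
      have : ∑ k, -A k i * y k = -∑ k, A k i * y k := by
        rw [← Finset.sum_neg_distrib]
        exact Finset.sum_congr rfl fun k _ => by ring
      rw [this] at h2
      linarith
    have : ∑ k, y k * A k i = ∑ k, A k i * y k :=
      Finset.sum_congr rfl fun k _ => mul_comm _ _
    rw [this]
    linarith

lemma lp_strong (A : κ → ι → ℝ) (b : κ → ℝ) (c : ι → ℝ) (D : ℝ)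
    (hfeas : ∃ x : ι → ℝ, ∀ k, ∑ i, A k i * x i ≤ b k)
    (hdual : ∀ y : κ → ℝ, (∀ k, 0 ≤ y k) → (∀ i, (∑ k, y k * A k i) + c i = 0) →
      -(∑ k, y k * b k) ≤ D) :
    ∃ x : ι → ℝ, (∀ k, ∑ i, A k i * x i ≤ b k) ∧ ∑ i, c i * x i ≤ D := by
  classical
  by_contra hcon
  push_neg at hcon
  set A' : κ ⊕ Unit → ι → ℝ := fun k' => Sum.elim A (fun _ => c) k' with hA'
  set b' : κ ⊕ Unit → ℝ := fun k' => Sum.elim b (fun _ => D) k' with hb'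
  have hns : ¬ ∃ x : ι → ℝ, ∀ k', ∑ i, A' k' i * x i ≤ b' k' := by
    rintro ⟨x, hx⟩
    have h1 : ∀ k, ∑ i, A k i * x i ≤ b k := fun k => hx (.inl k)
    have h2 : ∑ i, c i * x i ≤ D := hx (.inr ())
    exact absurd h2 (not_le.2 (hcon x h1))
  obtain ⟨y', hy'nn, hy'col, hy'obj⟩ := farkas_ineq A' b' hns
  set y : κ → ℝ := fun k => y' (.inl k) with hy
  set y₀ : ℝ := y' (.inr ()) with hy₀
  have hcol : ∀ i, ∑ k, y k * A k i + y₀ * c i = 0 := by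
    intro i
    have := hy'col i
    rw [Fintype.sum_sum_type] at this
    simpa [hA', hy, hy₀] using this
  have hobj : ∑ k, y k * b k + y₀ * D < 0 := by
    have := hy'obj
    rw [Fintype.sum_sum_type] at this
    simpa [hb', hy, hy₀] using this
  have hy₀nn : 0 ≤ y₀ := hy'nn (.inr ())
  rcases eq_or_lt_of_le hy₀nn with hy₀z | hy₀pos
  · -- y₀ = 0
    obtain ⟨x₀, hx₀⟩ := hfeas
    have hcol0 : ∀ i, ∑ k, y k * A k i = 0 := by
      intro i; have := hcol i; rw [← hy₀z] at this; linarith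
    have hswap : ∑ k, y k * (∑ i, A k i * x₀ i) = ∑ i, (∑ k, y k * A k i) * x₀ i := by
      simp_rw [Finset.mul_sum, Finset.sum_mul]
      rw [Finset.sum_comm]
      apply Finset.sum_congr rfl; intro k _
      apply Finset.sum_congr rfl; intro i _
      ring
    have hz : ∑ k, y k * (∑ i, A k i * x₀ i) = 0 := by
      rw [hswap]
      exact Finset.sum_eq_zero fun i _ => by rw [hcol0 i, zero_mul]
    have hle : ∑ k, y k * (∑ i, A k i * x₀ i) ≤ ∑ k, y k * b k :=
      Finset.sum_le_sum fun k _ => mul_le_mul_of_nonneg_left (hx₀ k) (hy'nn (.inl k))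
    rw [hz] at hle
    rw [← hy₀z] at hobj
    linarith
  · -- y₀ > 0
    have := hdual (fun k => y k / y₀) (fun k => div_nonneg (hy'nn (.inl k)) hy₀nn)
      (by
        intro i
        have h := hcol i
        have : ∑ k, y k / y₀ * A k i = (∑ k, y k * A k i) / y₀ := by
          rw [Finset.sum_div]
          exact Finset.sum_congr rfl fun k _ => by ring
        rw [this]
        field_simp
        linarith)
    have hsum : ∑ k, y k / y₀ * b k = (∑ k, y k * b k) / y₀ := by
      rw [Finset.sum_div]
      exact Finset.sum_congr rfl fun k _ => by ring
    rw [hsum] at this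
    have : -(∑ k, y k * b k) ≤ y₀ * D := by
      rw [neg_le] at this ⊢
      calc -(y₀ * D) = y₀ * (-D) := by ring
        _ ≤ y₀ * ((∑ k, y k * b k) / y₀) := by
            apply mul_le_mul_of_nonneg_left _ hy₀nn
            linarith
        _ = ∑ k, y k * b k := by field_simp
    linarith
end Farkas


abbrev MIdx (m n : ℕ) := (Fin m × Fin n) ⊕ Fin m
abbrev KIdx (m n : ℕ) := MIdx m n ⊕ (Fin n ⊕ (Fin m ⊕ (Fin m ⊕ ((Fin m × Fin n) ⊕
  (Fin m ⊕ ((Fin m × Fin m) ⊕ (Fin m × Fin m)))))))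

/-- row of constraint matrix -/
noncomputable def Arow {m n : ℕ} (lam : Fin m → ℝ) : KIdx m n → MIdx m n → ℝ :=
  Sum.elim (fun k v => if v = k then (-1:ℝ) else 0)
  (Sum.elim (fun j => Sum.elim (fun p => if p.2 = j then (1:ℝ) else 0) (fun _ => 0))
  (Sum.elim (fun i => Sum.elim (fun p => if p.1 = i then (1:ℝ) else 0)
      (fun i' => if i' = i then 1 else 0))
  (Sum.elim (fun i v => -(Sum.elim (fun p => if p.1 = i then (1:ℝ) else 0)
      (fun i' => if i' = i then 1 else 0) v))
  (Sum.elim (fun p0 v => if v = Sum.inl p0 then (1:ℝ) else 0)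
  (Sum.elim (fun i => Sum.elim (fun _ => (0:ℝ)) (fun i' => if i' = i then 1 / lam i else 0))
  (Sum.elim (fun r v => if r.1 < r.2 then (Sum.elim (fun _ => (0:ℝ))
      (fun i => (if i = r.1 then 1 / lam r.1 else 0) - (if i = r.2 then 1 / lam r.2 else 0)) v)
      else 0)
  (fun r v => -(if r.1 < r.2 then (Sum.elim (fun _ => (0:ℝ))
      (fun i => (if i = r.1 then 1 / lam r.1 else 0) - (if i = r.2 then 1 / lam r.2 else 0)) v)
      else 0))))))))

noncomputable def bvec {m n : ℕ} (lam : Fin m → ℝ) (C : Fin n → ℝ) (a : Fin m → Fin n → ℝ)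
    (θ β : ℝ) (z : Fin n → ℝ) : KIdx m n → ℝ :=
  Sum.elim (fun _ => 0)
  (Sum.elim (fun j => C j * (1 - z j))
  (Sum.elim (fun i => lam i)
  (Sum.elim (fun i => -lam i)
  (Sum.elim (fun p => C p.2 * a p.1 p.2)
  (Sum.elim (fun _ => θ)
  (Sum.elim (fun r => if r.1 < r.2 then β else 0)
  (fun r => if r.1 < r.2 then β else 0)))))))

noncomputable def cvec {m n : ℕ} (d : Fin m → Fin n → ℝ) (φ : Fin m → ℝ) (γ : ℝ) : MIdx m n → ℝ :=
  Sum.elim (fun p => γ * d p.1 p.2) (fun i => (1 - γ) * φ i)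

section rows
variable {m n : ℕ} (lam : Fin m → ℝ) (u : MIdx m n → ℝ)

lemma row0 (k : MIdx m n) : ∑ v, Arow lam (Sum.inl k) v * u v = -(u k) := by
  simp [Arow, ite_mul, Finset.sum_ite_eq']

lemma row3 (j : Fin n) : ∑ v, Arow lam (Sum.inr (Sum.inl j)) v * u v
    = ∑ i, u (Sum.inl (i, j)) := by
  simp [Arow, Fintype.sum_sum_type, Fintype.sum_prod_type, ite_mul, Finset.sum_ite_eq']

lemma row4 (i : Fin m) : ∑ v, Arow lam (Sum.inr (Sum.inr (Sum.inl i))) v * u v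
    = (∑ j, u (Sum.inl (i, j))) + u (Sum.inr i) := by
  simp only [Arow, Sum.elim_inr, Sum.elim_inl, Fintype.sum_sum_type, Fintype.sum_prod_type,
    ite_mul, one_mul, zero_mul, Finset.sum_ite_eq, Finset.sum_ite_eq', Finset.mem_univ,
    if_pos]
  rw [Finset.sum_comm]
  simp [Finset.sum_ite_eq']

lemma row5 (i : Fin m) : ∑ v, Arow lam (Sum.inr (Sum.inr (Sum.inr (Sum.inl i)))) v * u v
    = -((∑ j, u (Sum.inl (i, j))) + u (Sum.inr i)) := by
  have : ∀ v, Arow lam (Sum.inr (Sum.inr (Sum.inr (Sum.inl i)))) v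
      = -(Arow (n := n) lam (Sum.inr (Sum.inr (Sum.inl i))) v) := fun v => by
    simp [Arow]
  rw [Finset.sum_congr rfl (fun v _ => by rw [this v, neg_mul])]
  rw [Finset.sum_neg_distrib, row4 lam u i]

lemma row6 (p0 : Fin m × Fin n) :
    ∑ v, Arow lam (Sum.inr (Sum.inr (Sum.inr (Sum.inr (Sum.inl p0))))) v * u v
    = u (Sum.inl p0) := by
  simp [Arow, ite_mul, Finset.sum_ite_eq']

lemma row7 (i : Fin m) :
    ∑ v, Arow lam (Sum.inr (Sum.inr (Sum.inr (Sum.inr (Sum.inr (Sum.inl i)))))) v * u v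
    = (1 / lam i) * u (Sum.inr i) := by
  simp [Arow, Fintype.sum_sum_type, ite_mul, Finset.sum_ite_eq']

lemma row8 (r : Fin m × Fin m) :
    ∑ v, Arow lam (Sum.inr (Sum.inr (Sum.inr (Sum.inr (Sum.inr (Sum.inr (Sum.inl r))))))) v * u v
    = if r.1 < r.2 then ((1 / lam r.1) * u (Sum.inr r.1) - (1 / lam r.2) * u (Sum.inr r.2))
      else 0 := by
  by_cases h : r.1 < r.2
  · have hne : r.1 ≠ r.2 := ne_of_lt h
    simp only [Arow, Sum.elim_inr, Sum.elim_inl, if_pos h]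
    rw [Fintype.sum_sum_type]
    simp only [Sum.elim_inl, Sum.elim_inr, zero_mul, Finset.sum_const_zero, zero_add]
    rw [Finset.sum_congr rfl (fun i (_ : i ∈ univ) => sub_mul
      (if i = r.1 then 1 / lam r.1 else 0) (if i = r.2 then 1 / lam r.2 else 0)
      (u (Sum.inr i)))]
    rw [Finset.sum_sub_distrib]
    simp [ite_mul, Finset.sum_ite_eq']
  · simp [Arow, if_neg h]

lemma row9 (r : Fin m × Fin m) :
    ∑ v, Arow lam (Sum.inr (Sum.inr (Sum.inr (Sum.inr (Sum.inr (Sum.inr (Sum.inr r))))))) v * u v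
    = -(if r.1 < r.2 then ((1 / lam r.1) * u (Sum.inr r.1) - (1 / lam r.2) * u (Sum.inr r.2))
      else 0) := by
  have : ∀ v, Arow lam (Sum.inr (Sum.inr (Sum.inr (Sum.inr (Sum.inr (Sum.inr (Sum.inr r))))))) v
      = -(Arow (n := n) lam (Sum.inr (Sum.inr (Sum.inr (Sum.inr (Sum.inr (Sum.inr
        (Sum.inl r))))))) v) := fun v => by simp [Arow]
  rw [Finset.sum_congr rfl (fun v _ => by rw [this v, neg_mul])]
  rw [Finset.sum_neg_distrib, row8 lam u r]
end rows

lemma pair_sum {m : ℕ} (f : Fin m × Fin m → ℝ) (w : Fin m → ℝ) (i : Fin m) :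
    ∑ r : Fin m × Fin m, f r * (if r.1 < r.2 then
      ((if i = r.1 then w r.1 else 0) - (if i = r.2 then w r.2 else 0)) else 0)
    = w i * ((∑ l ∈ univ.filter (fun l => i < l), f (i, l))
      - (∑ l ∈ univ.filter (fun l => l < i), f (l, i))) := by
  have hterm : ∀ r : Fin m × Fin m, f r * (if r.1 < r.2 then
      ((if i = r.1 then w r.1 else 0) - (if i = r.2 then w r.2 else 0)) else 0)
      = (if r.1 < r.2 then (if i = r.1 then f r * w i else 0) else 0)
        - (if r.1 < r.2 then (if i = r.2 then f r * w i else 0) else 0) := by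
    rintro ⟨r1, r2⟩
    by_cases h : r1 < r2
    case neg => simp [h]
    by_cases h1 : i = r1
    · subst h1
      by_cases h2 : i = r2
      · subst h2; exact absurd h (lt_irrefl i)
      · simp only [if_pos h, eq_self_iff_true, if_true, if_neg h2]; ring
    · by_cases h2 : i = r2
      · subst h2; simp only [if_pos h, eq_self_iff_true, if_true, if_neg h1]; ring
      · simp [h, h1, h2]
  rw [Finset.sum_congr rfl (fun r _ => hterm r), Finset.sum_sub_distrib]
  have S1 : ∑ r : Fin m × Fin m, (if r.1 < r.2 then (if i = r.1 then f r * w i else 0) else 0)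
      = (∑ l ∈ univ.filter (fun l => i < l), f (i, l)) * w i := by
    rw [Fintype.sum_prod_type]
    rw [Finset.sum_eq_single_of_mem i (Finset.mem_univ i)
      (fun b _ hb => Finset.sum_eq_zero fun r2 _ => by simp [Ne.symm hb])]
    simp only [eq_self_iff_true, if_true]
    rw [← Finset.sum_filter, Finset.sum_mul]
  have S2 : ∑ r : Fin m × Fin m, (if r.1 < r.2 then (if i = r.2 then f r * w i else 0) else 0)
      = (∑ l ∈ univ.filter (fun l => l < i), f (l, i)) * w i := by
    rw [Fintype.sum_prod_type_right]
    rw [Finset.sum_eq_single_of_mem i (Finset.mem_univ i)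
      (fun b _ hb => Finset.sum_eq_zero fun r1 _ => by simp [Ne.symm hb])]
    simp only [eq_self_iff_true, if_true]
    rw [← Finset.sum_filter, Finset.sum_mul]
  rw [S1, S2]; ring

section cols
variable {m n : ℕ} (lam : Fin m → ℝ) (y : KIdx m n → ℝ)

lemma col_x (i : Fin m) (j : Fin n) :
    ∑ k, y k * Arow lam k (Sum.inl (i, j))
    = -(y (Sum.inl (Sum.inl (i, j)))) + y (Sum.inr (Sum.inl j))
      + y (Sum.inr (Sum.inr (Sum.inl i))) - y (Sum.inr (Sum.inr (Sum.inr (Sum.inl i))))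
      + y (Sum.inr (Sum.inr (Sum.inr (Sum.inr (Sum.inl (i, j)))))) := by
  simp only [Arow, Fintype.sum_sum_type, Fintype.sum_prod_type, Sum.elim_inl, Sum.elim_inr,
    mul_ite, mul_zero, mul_one, mul_neg_one, ite_self, Finset.sum_const_zero,
    Finset.sum_ite_eq, Finset.sum_ite_eq', Finset.mem_univ, if_pos, reduceCtorEq, if_false,
    Sum.inl.injEq, if_true, Prod.mk.injEq, mul_neg, neg_zero, mul_zero,
    Finset.sum_neg_distrib]
  ring

lemma col_q (i : Fin m) :
    ∑ k, y k * Arow lam k (Sum.inr i)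
    = -(y (Sum.inl (Sum.inr i))) + y (Sum.inr (Sum.inr (Sum.inl i)))
      - y (Sum.inr (Sum.inr (Sum.inr (Sum.inl i))))
      + (1 / lam i) * y (Sum.inr (Sum.inr (Sum.inr (Sum.inr (Sum.inr (Sum.inl i))))))
      + (1 / lam i) * ((∑ l ∈ univ.filter (fun l => i < l),
            y (Sum.inr (Sum.inr (Sum.inr (Sum.inr (Sum.inr (Sum.inr (Sum.inl (i, l)))))))))
          - (∑ l ∈ univ.filter (fun l => l < i),
            y (Sum.inr (Sum.inr (Sum.inr (Sum.inr (Sum.inr (Sum.inr (Sum.inl (l, i))))))))))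
      - (1 / lam i) * ((∑ l ∈ univ.filter (fun l => i < l),
            y (Sum.inr (Sum.inr (Sum.inr (Sum.inr (Sum.inr (Sum.inr (Sum.inr (i, l)))))))))
          - (∑ l ∈ univ.filter (fun l => l < i),
            y (Sum.inr (Sum.inr (Sum.inr (Sum.inr (Sum.inr (Sum.inr (Sum.inr (l, i)))))))))) := by
  simp only [Fintype.sum_sum_type, Arow, Sum.elim_inl, Sum.elim_inr, mul_neg, mul_zero,
    neg_zero, Finset.sum_neg_distrib, Finset.sum_const_zero, reduceCtorEq, if_false]
  rw [pair_sum (fun r => y (Sum.inr (Sum.inr (Sum.inr (Sum.inr (Sum.inr (Sum.inr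
    (Sum.inl r)))))))) (fun t => 1 / lam t) i]
  rw [pair_sum (fun r => y (Sum.inr (Sum.inr (Sum.inr (Sum.inr (Sum.inr (Sum.inr
    (Sum.inr r)))))))) (fun t => 1 / lam t) i]
  simp only [mul_ite, mul_zero, mul_one, Sum.inr.injEq, Finset.sum_ite_eq, Finset.mem_univ,
    if_true]
  ring

end cols

lemma smc {α : Type*} [Fintype α] (f g : α → ℝ) :
    ∑ x, f x * g x = ∑ x, g x * f x :=
  Finset.sum_congr rfl fun _ _ => mul_comm _ _

lemma bdot {m n : ℕ} (lam : Fin m → ℝ) (C : Fin n → ℝ) (a : Fin m → Fin n → ℝ)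
    (θ β : ℝ) (z : Fin n → ℝ) (y : KIdx m n → ℝ) :
    ∑ k, y k * bvec lam C a θ β z k
    = (∑ j, C j * (1 - z j) * y (Sum.inr (Sum.inl j)))
      + ((∑ i, lam i * y (Sum.inr (Sum.inr (Sum.inl i))))
        - (∑ i, lam i * y (Sum.inr (Sum.inr (Sum.inr (Sum.inl i))))))
      + (∑ i, ∑ j, C j * a i j * y (Sum.inr (Sum.inr (Sum.inr (Sum.inr (Sum.inl (i, j)))))))
      + θ * (∑ i, y (Sum.inr (Sum.inr (Sum.inr (Sum.inr (Sum.inr (Sum.inl i)))))))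
      + β * (∑ i, ∑ i' ∈ univ.filter (fun i' => i < i'),
          y (Sum.inr (Sum.inr (Sum.inr (Sum.inr (Sum.inr (Sum.inr (Sum.inl (i, i')))))))))
      + β * (∑ i, ∑ i' ∈ univ.filter (fun i' => i < i'),
          y (Sum.inr (Sum.inr (Sum.inr (Sum.inr (Sum.inr (Sum.inr (Sum.inr (i, i'))))))))) := by
  simp only [bvec, Fintype.sum_sum_type, Fintype.sum_prod_type, Sum.elim_inl, Sum.elim_inr,
    mul_zero, Finset.sum_const_zero, zero_add, mul_ite, mul_neg]
  have hβ : ∀ w : Fin m × Fin m → ℝ,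
      (∑ r1 : Fin m, ∑ r2 : Fin m, if r1 < r2 then w (r1, r2) * β else 0)
      = β * ∑ i, ∑ i' ∈ univ.filter (fun i' => i < i'), w (i, i') := by
    intro w
    rw [Finset.mul_sum]
    apply Finset.sum_congr rfl
    intro r1 _
    rw [← Finset.sum_filter, Finset.mul_sum]
    exact Finset.sum_congr rfl fun r2 _ => mul_comm _ _
  rw [hβ (fun r => y (Sum.inr (Sum.inr (Sum.inr (Sum.inr (Sum.inr (Sum.inr (Sum.inl r)))))))),
    hβ (fun r => y (Sum.inr (Sum.inr (Sum.inr (Sum.inr (Sum.inr (Sum.inr (Sum.inr r))))))))]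
  rw [smc (fun j => y (Sum.inr (Sum.inl j))) (fun j => C j * (1 - z j))]
  rw [smc (fun i => y (Sum.inr (Sum.inr (Sum.inl i)))) lam]
  have h5 : ∑ i, -(y (Sum.inr (Sum.inr (Sum.inr (Sum.inl i)))) * lam i)
      = -∑ i, lam i * y (Sum.inr (Sum.inr (Sum.inr (Sum.inl i)))) := by
    rw [← Finset.sum_neg_distrib]
    exact Finset.sum_congr rfl fun i _ => by ring
  rw [h5]
  have h6 : ∑ i : Fin m, ∑ j : Fin n,
      y (Sum.inr (Sum.inr (Sum.inr (Sum.inr (Sum.inl (i, j)))))) * (C j * a i j)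
      = ∑ i, ∑ j, C j * a i j * y (Sum.inr (Sum.inr (Sum.inr (Sum.inr (Sum.inl (i, j)))))) :=
    Finset.sum_congr rfl fun i _ => Finset.sum_congr rfl fun j _ => mul_comm _ _
  rw [h6]
  have h7 : ∑ i : Fin m, y (Sum.inr (Sum.inr (Sum.inr (Sum.inr (Sum.inr (Sum.inl i)))))) * θ
      = θ * ∑ i, y (Sum.inr (Sum.inr (Sum.inr (Sum.inr (Sum.inr (Sum.inl i)))))) := by
    rw [Finset.mul_sum]
    exact Finset.sum_congr rfl fun i _ => mul_comm _ _
  rw [h7]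
  ring

lemma weak_duality {m n : ℕ} (lam : Fin m → ℝ) (C : Fin n → ℝ)
    (d : Fin m → Fin n → ℝ) (φ : Fin m → ℝ) (a : Fin m → Fin n → ℝ)
    (γ θ β : ℝ) (z : Fin n → ℝ)
    (π : Fin n → ℝ) (μ : Fin m → ℝ) (σ : Fin m → Fin n → ℝ)
    (η τ : Fin m → Fin m → ℝ) (ν : Fin m → ℝ)
    (hdf : DualFeasible lam d φ γ π μ σ η τ ν)
    (p : (Fin m → Fin n → ℝ) × (Fin m → ℝ)) (hp : p ∈ Feas lam C a θ β z) :
    Dobj lam C a θ β z π μ σ η τ ν ≤ cost d φ γ p := by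
  obtain ⟨hx, hq, hcap, heq, hxa, hth, hab⟩ := hp
  obtain ⟨hπ, hσ, hν, hη, hτ, hc1, hc2⟩ := hdf
  set x := p.1 with hxdef
  set q := p.2 with hqdef
  set Q : Fin m → ℝ := fun i => q i / lam i with hQ
  -- piecewise bounds
  have t1 : -(∑ j, C j * (1 - z j) * π j) ≤ -(∑ j, (∑ i, x i j) * π j) := by
    apply neg_le_neg
    exact Finset.sum_le_sum fun j _ => mul_le_mul_of_nonneg_right (hcap j) (hπ j)
  have t2 : ∑ i, lam i * μ i = ∑ i, ((∑ j, x i j) + q i) * μ i := by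
    exact Finset.sum_congr rfl fun i _ => by rw [heq i]
  have t3 : -(∑ i, ∑ j, C j * a i j * σ i j) ≤ -(∑ i, ∑ j, x i j * σ i j) := by
    apply neg_le_neg
    exact Finset.sum_le_sum fun i _ => Finset.sum_le_sum fun j _ =>
      mul_le_mul_of_nonneg_right (hxa i j) (hσ i j)
  have t4 : -(β * ∑ i, ∑ i' ∈ univ.filter (fun i' => i < i'), (η i i' + τ i i'))
      ≤ -(∑ i, ∑ i' ∈ univ.filter (fun i' => i < i'),
          (η i i' * (Q i - Q i') + τ i i' * (Q i' - Q i))) := by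
    apply neg_le_neg
    rw [Finset.mul_sum]
    refine Finset.sum_le_sum fun i _ => ?_
    rw [Finset.mul_sum]
    refine Finset.sum_le_sum fun i' hi' => ?_
    have hlt : i < i' := by simpa using hi'
    have h1 : Q i - Q i' ≤ β := (abs_le.1 (hab i i')).2
    have h2 : Q i' - Q i ≤ β := by
      have := (abs_le.1 (hab i i')).1; linarith
    have := add_le_add (mul_le_mul_of_nonneg_left h1 (hη i i' hlt))
      (mul_le_mul_of_nonneg_left h2 (hτ i i' hlt))
    calc η i i' * (Q i - Q i') + τ i i' * (Q i' - Q i)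
        ≤ η i i' * β + τ i i' * β := this
      _ = β * (η i i' + τ i i') := by ring
  have t5 : -(θ * ∑ i, ν i) ≤ -(∑ i, ν i * Q i) := by
    apply neg_le_neg
    rw [Finset.mul_sum]
    exact Finset.sum_le_sum fun i _ => by
      calc ν i * Q i ≤ ν i * θ := mul_le_mul_of_nonneg_left (hth i) (hν i)
        _ = θ * ν i := mul_comm _ _
  -- regrouping identity for the pair terms
  have pairid : ∑ i, ∑ i' ∈ univ.filter (fun i' => i < i'),
        (η i i' * (Q i - Q i') + τ i i' * (Q i' - Q i))
      = ∑ i, (∑ l ∈ univ.filter (fun l => i < l), (η i l - τ i l)) * Q i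
        - ∑ i, (∑ l ∈ univ.filter (fun l => l < i), (η l i - τ l i)) * Q i := by
    have e1 : ∀ i : Fin m, ∑ i' ∈ univ.filter (fun i' => i < i'),
          (η i i' * (Q i - Q i') + τ i i' * (Q i' - Q i))
        = ∑ i' : Fin m, ((if i < i' then (η i i' - τ i i') else 0) * Q i
            - (if i < i' then (η i i' - τ i i') else 0) * Q i') := by
      intro i
      rw [← Finset.sum_filter_add_sum_filter_not univ (fun i' => i < i')
        (fun i' => ((if i < i' then (η i i' - τ i i') else 0) * Q i
            - (if i < i' then (η i i' - τ i i') else 0) * Q i'))]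
      have : ∑ i' ∈ univ.filter (fun i' => ¬ i < i'),
          ((if i < i' then (η i i' - τ i i') else 0) * Q i
            - (if i < i' then (η i i' - τ i i') else 0) * Q i') = 0 := by
        apply Finset.sum_eq_zero
        intro i' hi'
        have : ¬ i < i' := by simpa using hi'
        simp [this]
      rw [this, add_zero]
      apply Finset.sum_congr rfl
      intro i' hi'
      have hlt : i < i' := by simpa using hi'
      simp only [if_pos hlt]
      ring
    rw [Finset.sum_congr rfl (fun i _ => e1 i)]
    rw [Finset.sum_congr rfl (fun i (_ : i ∈ univ) => Finset.sum_sub_distrib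
      (f := fun i' => (if i < i' then (η i i' - τ i i') else 0) * Q i)
      (g := fun i' => (if i < i' then (η i i' - τ i i') else 0) * Q i'))]
    rw [Finset.sum_sub_distrib]
    congr 1
    · apply Finset.sum_congr rfl
      intro i _
      rw [← Finset.sum_mul]
      congr 1
      rw [Finset.sum_filter]
    · rw [Finset.sum_comm]
      apply Finset.sum_congr rfl
      intro i _
      rw [← Finset.sum_mul]
      congr 1
      rw [Finset.sum_filter]
  -- main chain
  have main : Dobj lam C a θ β z π μ σ η τ ν ≤
      (∑ i, ∑ j, (-π j + μ i - σ i j) * x i j)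
      + ∑ i, (μ i - (1 / lam i) * (∑ l ∈ univ.filter (fun l => i < l), (η i l - τ i l))
          + (1 / lam i) * (∑ l ∈ univ.filter (fun l => l < i), (η l i - τ l i))
          - ν i / lam i) * q i := by
    have hsum : Dobj lam C a θ β z π μ σ η τ ν ≤
        -(∑ j, (∑ i, x i j) * π j) + ∑ i, ((∑ j, x i j) + q i) * μ i
          - ∑ i, ∑ j, x i j * σ i j
          - ∑ i, ∑ i' ∈ univ.filter (fun i' => i < i'),
              (η i i' * (Q i - Q i') + τ i i' * (Q i' - Q i))
          - ∑ i, ν i * Q i := by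
      unfold Dobj
      rw [t2]
      have := add_le_add (add_le_add (add_le_add (add_le_add t1 (le_refl
        (∑ i, ((∑ j, x i j) + q i) * μ i))) t3) t4) t5
      linarith [this]
    refine hsum.trans (le_of_eq ?_)
    rw [pairid]
    -- now a pure algebraic identity
    have swap1 : ∑ j, (∑ i, x i j) * π j = ∑ i, ∑ j, π j * x i j := by
      rw [Finset.sum_comm]
      apply Finset.sum_congr rfl
      intro j _
      rw [Finset.sum_mul]
      exact Finset.sum_congr rfl fun i _ => mul_comm _ _
    rw [swap1]
    have expand2 : ∑ i, ((∑ j, x i j) + q i) * μ i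
        = (∑ i, ∑ j, μ i * x i j) + ∑ i, μ i * q i := by
      rw [← Finset.sum_add_distrib]
      apply Finset.sum_congr rfl
      intro i _
      rw [add_mul, Finset.sum_mul]
      congr 1
      · exact Finset.sum_congr rfl fun j _ => mul_comm _ _
      · exact mul_comm _ _
    rw [expand2]
    have grp1 : ∑ i, ∑ j, (-π j + μ i - σ i j) * x i j
        = -(∑ i, ∑ j, π j * x i j) + (∑ i, ∑ j, μ i * x i j)
          - ∑ i, ∑ j, x i j * σ i j := by
      rw [← Finset.sum_neg_distrib, ← Finset.sum_add_distrib, ← Finset.sum_sub_distrib]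
      apply Finset.sum_congr rfl
      intro i _
      rw [← Finset.sum_neg_distrib, ← Finset.sum_add_distrib, ← Finset.sum_sub_distrib]
      exact Finset.sum_congr rfl fun j _ => by ring
    have grp2 : ∑ i, (μ i - (1 / lam i) * (∑ l ∈ univ.filter (fun l => i < l), (η i l - τ i l))
          + (1 / lam i) * (∑ l ∈ univ.filter (fun l => l < i), (η l i - τ l i))
          - ν i / lam i) * q i
        = ∑ i, μ i * q i
          - ∑ i, (∑ l ∈ univ.filter (fun l => i < l), (η i l - τ i l)) * Q i
          + ∑ i, (∑ l ∈ univ.filter (fun l => l < i), (η l i - τ l i)) * Q i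
          - ∑ i, ν i * Q i := by
      rw [← Finset.sum_sub_distrib, ← Finset.sum_add_distrib, ← Finset.sum_sub_distrib]
      apply Finset.sum_congr rfl
      intro i _
      rw [hQ]
      field_simp
    rw [grp1, grp2]
    ring
  -- final bound
  have fin1 : ∑ i, ∑ j, (-π j + μ i - σ i j) * x i j ≤ ∑ i, ∑ j, γ * d i j * x i j :=
    Finset.sum_le_sum fun i _ => Finset.sum_le_sum fun j _ =>
      mul_le_mul_of_nonneg_right (hc1 i j) (hx i j)
  have fin2 : ∑ i, (μ i - (1 / lam i) * (∑ l ∈ univ.filter (fun l => i < l), (η i l - τ i l))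
          + (1 / lam i) * (∑ l ∈ univ.filter (fun l => l < i), (η l i - τ l i))
          - ν i / lam i) * q i ≤ ∑ i, (1 - γ) * φ i * q i :=
    Finset.sum_le_sum fun i _ => mul_le_mul_of_nonneg_right (hc2 i) (hq i)
  have : cost d φ γ p = (∑ i, ∑ j, γ * d i j * x i j) + ∑ i, (1 - γ) * φ i * q i := by
    unfold cost
    simp only [Finset.mul_sum]
    rw [add_comm]
    congr 1
    · exact Finset.sum_congr rfl fun i _ => Finset.sum_congr rfl fun j _ => by ring
    · exact Finset.sum_congr rfl fun i _ => by ring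
  rw [this]
  exact main.trans (add_le_add fin1 fin2)

lemma cost_eq {m n : ℕ} (d : Fin m → Fin n → ℝ) (φ : Fin m → ℝ) (γ : ℝ)
    (u : MIdx m n → ℝ) :
    ∑ v, cvec d φ γ v * u v
      = cost d φ γ (fun i j => u (Sum.inl (i, j)), fun i => u (Sum.inr i)) := by
  unfold cost cvec
  simp only [Fintype.sum_sum_type, Fintype.sum_prod_type, Sum.elim_inl, Sum.elim_inr,
    Finset.mul_sum]
  rw [add_comm]
  congr 1
  · exact Finset.sum_congr rfl fun i _ => by ring
  · exact Finset.sum_congr rfl fun i _ => Finset.sum_congr rfl fun j _ => by ring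

lemma strong_dir {m n : ℕ} (lam : Fin m → ℝ) (C : Fin n → ℝ) (d : Fin m → Fin n → ℝ)
    (φ : Fin m → ℝ) (a : Fin m → Fin n → ℝ) (γ θ β : ℝ) (hβ : 0 ≤ β) (z : Fin n → ℝ)
    (hne : (Feas lam C a θ β z).Nonempty) (D : ℝ)
    (hmax : ∀ (π : Fin n → ℝ) (μ : Fin m → ℝ) (σ : Fin m → Fin n → ℝ)
      (η τ : Fin m → Fin m → ℝ) (ν : Fin m → ℝ),
      DualFeasible lam d φ γ π μ σ η τ ν → Dobj lam C a θ β z π μ σ η τ ν ≤ D) :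
    ∃ p ∈ Feas lam C a θ β z, cost d φ γ p ≤ D := by
  -- primal feasibility in matrix form
  have hfeas : ∃ u : MIdx m n → ℝ, ∀ k, ∑ v, Arow lam k v * u v ≤ bvec lam C a θ β z k := by
    obtain ⟨p, hx, hq, hcap, heq, hxa, hth, hab⟩ := hne
    refine ⟨Sum.elim (fun r => p.1 r.1 r.2) p.2, ?_⟩
    intro k
    rcases k with k0 | j | i | i | p0 | i | r | r
    · rw [row0]
      rcases k0 with ⟨i, j⟩ | i
      · simpa [bvec] using hx i j
      · simpa [bvec] using hq i
    · rw [row3]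
      simpa [bvec] using hcap j
    · rw [row4]
      simpa [bvec] using le_of_eq (heq i)
    · rw [row5]
      simpa [bvec] using le_of_eq (congrArg Neg.neg (heq i))
    · rw [row6]
      simpa [bvec] using hxa p0.1 p0.2
    · rw [row7]
      simp only [bvec, Sum.elim_inl, Sum.elim_inr]
      have e : (1 / lam i) * p.2 i = p.2 i / lam i := by ring
      rw [e]
      exact hth i
    · rw [row8]
      by_cases h : r.1 < r.2
      · have h1 := (abs_le.1 (hab r.1 r.2)).2
        have e1 : (1 / lam r.1) * p.2 r.1 = p.2 r.1 / lam r.1 := by ring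
        have e2 : (1 / lam r.2) * p.2 r.2 = p.2 r.2 / lam r.2 := by ring
        rw [if_pos h]
        simp only [bvec, Sum.elim_inl, Sum.elim_inr, if_pos h]
        rw [e1, e2]
        linarith
      · simp [bvec, h]
    · rw [row9]
      by_cases h : r.1 < r.2
      · have h1 := (abs_le.1 (hab r.1 r.2)).1
        have e1 : (1 / lam r.1) * p.2 r.1 = p.2 r.1 / lam r.1 := by ring
        have e2 : (1 / lam r.2) * p.2 r.2 = p.2 r.2 / lam r.2 := by ring
        rw [if_pos h]
        simp only [bvec, Sum.elim_inl, Sum.elim_inr, if_pos h]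
        rw [e1, e2]
        linarith
      · simp [bvec, h]
  -- dual bound in matrix form
  have hdual : ∀ y : KIdx m n → ℝ, (∀ k, 0 ≤ y k) →
      (∀ v, (∑ k, y k * Arow lam k v) + cvec d φ γ v = 0) →
      -(∑ k, y k * bvec lam C a θ β z k) ≤ D := by
    intro y hy hyeq
    set π : Fin n → ℝ := fun j => y (Sum.inr (Sum.inl j)) with hπdef
    set y4 : Fin m → ℝ := fun i => y (Sum.inr (Sum.inr (Sum.inl i))) with hy4def
    set y5 : Fin m → ℝ := fun i => y (Sum.inr (Sum.inr (Sum.inr (Sum.inl i)))) with hy5def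
    set σ : Fin m → Fin n → ℝ :=
      fun i j => y (Sum.inr (Sum.inr (Sum.inr (Sum.inr (Sum.inl (i, j)))))) with hσdef
    set ν : Fin m → ℝ :=
      fun i => y (Sum.inr (Sum.inr (Sum.inr (Sum.inr (Sum.inr (Sum.inl i)))))) with hνdef
    set η : Fin m → Fin m → ℝ := fun i i' =>
      y (Sum.inr (Sum.inr (Sum.inr (Sum.inr (Sum.inr (Sum.inr (Sum.inl (i, i')))))))) with hηdef
    set τ : Fin m → Fin m → ℝ := fun i i' =>
      y (Sum.inr (Sum.inr (Sum.inr (Sum.inr (Sum.inr (Sum.inr (Sum.inr (i, i')))))))) with hτdef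
    set μ : Fin m → ℝ := fun i => y5 i - y4 i with hμdef
    have hdf : DualFeasible lam d φ γ π μ σ η τ ν := by
      refine ⟨fun j => hy _, fun i j => hy _, fun i => hy _, fun i i' _ => hy _,
        fun i i' _ => hy _, ?_, ?_⟩
      · intro i j
        have h := hyeq (Sum.inl (i, j))
        rw [col_x] at h
        simp only [cvec, Sum.elim_inl] at h
        have h1 := hy (Sum.inl (Sum.inl (i, j)))
        simp only [hπdef, hy4def, hy5def, hσdef, hμdef]
        linarith
      · intro i
        have h := hyeq (Sum.inr i)
        rw [col_q] at h
        simp only [cvec, Sum.elim_inr] at h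
        have h1 := hy (Sum.inl (Sum.inr i))
        have e1 : ∑ l ∈ univ.filter (fun l => i < l), (η i l - τ i l)
            = (∑ l ∈ univ.filter (fun l => i < l), η i l)
              - (∑ l ∈ univ.filter (fun l => i < l), τ i l) := Finset.sum_sub_distrib _ _
        have e2 : ∑ l ∈ univ.filter (fun l => l < i), (η l i - τ l i)
            = (∑ l ∈ univ.filter (fun l => l < i), η l i)
              - (∑ l ∈ univ.filter (fun l => l < i), τ l i) := Finset.sum_sub_distrib _ _
        rw [e1, e2]
        have e3 : ν i / lam i = (1 / lam i) * ν i := by ring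
        rw [hμdef, e3]
        simp only [hπdef, hy4def, hy5def, hσdef, hνdef, hηdef, hτdef] at h ⊢
        linarith
    have hobj : Dobj lam C a θ β z π μ σ η τ ν
        = -(∑ k, y k * bvec lam C a θ β z k) := by
      rw [bdot]
      unfold Dobj
      have e4 : ∑ i, lam i * μ i = (∑ i, lam i * y5 i) - ∑ i, lam i * y4 i := by
        rw [← Finset.sum_sub_distrib]
        exact Finset.sum_congr rfl fun i _ => by rw [hμdef]; ring
      have e5 : ∑ i, ∑ i' ∈ univ.filter (fun i' => i < i'), (η i i' + τ i i')
          = (∑ i, ∑ i' ∈ univ.filter (fun i' => i < i'), η i i')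
            + (∑ i, ∑ i' ∈ univ.filter (fun i' => i < i'), τ i i') := by
        rw [← Finset.sum_add_distrib]
        exact Finset.sum_congr rfl fun i _ => Finset.sum_add_distrib
      rw [e4, e5]
      simp only [hπdef, hy4def, hy5def, hσdef, hνdef, hηdef, hτdef]
      ring
    have := hmax π μ σ η τ ν hdf
    linarith [hobj ▸ this]
  obtain ⟨u, hu, hcost⟩ := lp_strong (Arow lam) (bvec lam C a θ β z) (cvec d φ γ) D hfeas hdual
  refine ⟨(fun i j => u (Sum.inl (i, j)), fun i => u (Sum.inr i)), ?_, ?_⟩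
  · -- decode is feasible
    have h0 : ∀ v : MIdx m n, 0 ≤ u v := by
      intro v
      have := hu (Sum.inl v)
      rw [row0] at this
      simpa [bvec] using this
    have h4 := fun i => hu (Sum.inr (Sum.inr (Sum.inl i)))
    have h5 := fun i => hu (Sum.inr (Sum.inr (Sum.inr (Sum.inl i))))
    simp only [row4, row5, bvec, Sum.elim_inl, Sum.elim_inr] at h4 h5
    refine ⟨fun i j => h0 (Sum.inl (i, j)), fun i => h0 (Sum.inr i), ?_, ?_, ?_, ?_, ?_⟩
    · intro j
      have := hu (Sum.inr (Sum.inl j))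
      rw [row3] at this
      simpa [bvec] using this
    · intro i
      have := h5 i
      have := h4 i
      have : (∑ j, u (Sum.inl (i, j))) + u (Sum.inr i) = lam i := by linarith [h4 i, h5 i]
      exact this
    · intro i j
      have := hu (Sum.inr (Sum.inr (Sum.inr (Sum.inr (Sum.inl (i, j))))))
      rw [row6] at this
      simpa [bvec] using this
    · intro i
      have := hu (Sum.inr (Sum.inr (Sum.inr (Sum.inr (Sum.inr (Sum.inl i))))))
      rw [row7] at this
      simp only [bvec, Sum.elim_inr] at this
      have e : (1 / lam i) * u (Sum.inr i) = u (Sum.inr i) / lam i := by ring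
      rw [e] at this
      exact this
    · intro i i'
      have key : ∀ r1 r2 : Fin m, r1 < r2 →
          u (Sum.inr r1) / lam r1 - u (Sum.inr r2) / lam r2 ≤ β ∧
          -(u (Sum.inr r1) / lam r1 - u (Sum.inr r2) / lam r2) ≤ β := by
        intro r1 r2 hlt
        have h8 := hu (Sum.inr (Sum.inr (Sum.inr (Sum.inr (Sum.inr (Sum.inr
          (Sum.inl (r1, r2))))))))
        have h9 := hu (Sum.inr (Sum.inr (Sum.inr (Sum.inr (Sum.inr (Sum.inr
          (Sum.inr (r1, r2))))))))
        rw [row8] at h8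
        rw [row9] at h9
        simp only [bvec, Sum.elim_inl, Sum.elim_inr, if_pos hlt] at h8 h9
        have e1 : (1 / lam r1) * u (Sum.inr r1) = u (Sum.inr r1) / lam r1 := by ring
        have e2 : (1 / lam r2) * u (Sum.inr r2) = u (Sum.inr r2) / lam r2 := by ring
        rw [e1, e2] at h8 h9
        exact ⟨h8, h9⟩
      rcases lt_trichotomy i i' with hlt | heq | hgt
      · have := key i i' hlt
        rw [abs_le]
        constructor <;> linarith [this.1, this.2]
      · subst heq
        simpa using hβ
      · have := key i' i hgt
        rw [abs_sub_comm, abs_le]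
        constructor <;> linarith [this.1, this.2]
  · rw [← cost_eq d φ γ u]
    calc ∑ v, cvec d φ γ v * u v = ∑ v, cvec d φ γ v * u v := rfl
      _ ≤ D := by
        have : ∑ v, cvec d φ γ v * u v = ∑ v, cvec d φ γ v * u v := rfl
        exact hcost

theorem stmt_12
    (m n : ℕ) (hm : 1 ≤ m) (hn : 1 ≤ n)
    (lam : Fin m → ℝ) (hlam : ∀ i, 0 < lam i)
    (C : Fin n → ℝ) (hC : ∀ j, 0 ≤ C j)
    (d : Fin m → Fin n → ℝ) (hd : ∀ i j, 0 ≤ d i j)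
    (φ : Fin m → ℝ) (hφ : ∀ i, 0 ≤ φ i)
    (a : Fin m → Fin n → ℝ) (ha : ∀ i j, a i j = 0 ∨ a i j = 1)
    (γ : ℝ) (hγ0 : 0 ≤ γ) (hγ1 : γ ≤ 1)
    (θ β : ℝ) (hθ : 0 ≤ θ) (hβ : 0 ≤ β)
    (K : ℕ) (Mbig : Fin n → ℝ)
    (hK : ∀ z : Fin n → ℝ, (∀ j, z j = 0 ∨ z j = 1) → (∑ j, z j) ≤ (K : ℝ) →
      (Feas lam C a θ β z).Nonempty ∧
      ∃ (π : Fin n → ℝ) (μ : Fin m → ℝ) (σ : Fin m → Fin n → ℝ)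
        (η τ : Fin m → Fin m → ℝ) (ν : Fin m → ℝ),
        DualFeasible lam d φ γ π μ σ η τ ν ∧
        (∀ (π' : Fin n → ℝ) (μ' : Fin m → ℝ) (σ' : Fin m → Fin n → ℝ)
          (η' τ' : Fin m → Fin m → ℝ) (ν' : Fin m → ℝ),
          DualFeasible lam d φ γ π' μ' σ' η' τ' ν' →
          Dobj lam C a θ β z π' μ' σ' η' τ' ν' ≤ Dobj lam C a θ β z π μ σ η τ ν) ∧
        (∀ j, π j ≤ Mbig j)) :
    ∃ v : ℝ,
      IsGreatest {w : ℝ | ∃ z : Fin n → ℝ, (∀ j, z j = 0 ∨ z j = 1) ∧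
          (∑ j, z j) ≤ (K : ℝ) ∧
          w = sInf (cost d φ γ '' Feas lam C a θ β z)} v ∧
      IsGreatest {w : ℝ | ∃ (z g π : Fin n → ℝ) (μ : Fin m → ℝ)
          (σ : Fin m → Fin n → ℝ) (η τ : Fin m → Fin m → ℝ) (ν : Fin m → ℝ),
          (∀ j, z j = 0 ∨ z j = 1) ∧ (∑ j, z j) ≤ (K : ℝ) ∧
          DualFeasible lam d φ γ π μ σ η τ ν ∧
          (∀ j, g j ≤ Mbig j * (1 - z j) ∧ g j ≤ π j ∧ 0 ≤ g j ∧ π j - Mbig j * z j ≤ g j) ∧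
          w = -(∑ j, C j * g j) + ∑ i, lam i * μ i - ∑ i, ∑ j, C j * a i j * σ i j
              - β * ∑ i, ∑ i' ∈ univ.filter (fun i' => i < i'), (η i i' + τ i i')
              - θ * ∑ i, ν i} v := by
  classical
  set Z : Set (Fin n → ℝ) := {z | (∀ j, z j = 0 ∨ z j = 1) ∧ (∑ j, z j) ≤ (K : ℝ)} with hZ
  have hZfin : Z.Finite := by
    have h01 : ({0, 1} : Set ℝ).Finite := (Set.finite_singleton 1).insert 0
    refine Set.Finite.subset (Set.Finite.pi (fun _ : Fin n => h01)) ?_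
    intro z hz
    rw [Set.mem_pi]
    intro j _
    rcases hz.1 j with h | h <;> simp [h]
  have hZne : Z.Nonempty := ⟨fun _ => 0, fun j => Or.inl rfl, by simp⟩
  obtain ⟨zs, hzsZ, hzsmax⟩ := Set.exists_max_image Z
    (fun z => sInf (cost d φ γ '' Feas lam C a θ β z)) hZfin hZne
  set v : ℝ := sInf (cost d φ γ '' Feas lam C a θ β zs) with hv
  have cost_nonneg : ∀ z : Fin n → ℝ, ∀ p ∈ Feas lam C a θ β z, 0 ≤ cost d φ γ p := by
    intro z p hp
    refine add_nonneg (mul_nonneg (by linarith) ?_) (mul_nonneg hγ0 ?_)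
    · exact Finset.sum_nonneg fun i _ => mul_nonneg (hφ i) (hp.2.1 i)
    · exact Finset.sum_nonneg fun i _ => Finset.sum_nonneg fun j _ =>
        mul_nonneg (hd i j) (hp.1 i j)
  have himg : ∀ z ∈ Z, (cost d φ γ '' Feas lam C a θ β z).Nonempty :=
    fun z hz => ((hK z hz.1 hz.2).1).image _
  have hbdd : ∀ z ∈ Z, BddBelow (cost d φ γ '' Feas lam C a θ β z) := by
    rintro z hz
    exact ⟨0, by rintro w ⟨p, hp, rfl⟩; exact cost_nonneg z p hp⟩
  have hweak : ∀ z ∈ Z, ∀ (π : Fin n → ℝ) (μ : Fin m → ℝ) (σ : Fin m → Fin n → ℝ)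
      (η τ : Fin m → Fin m → ℝ) (ν : Fin m → ℝ),
      DualFeasible lam d φ γ π μ σ η τ ν →
      Dobj lam C a θ β z π μ σ η τ ν ≤ sInf (cost d φ γ '' Feas lam C a θ β z) := by
    intro z hz π μ σ η τ ν hdf
    refine le_csInf (himg z hz) ?_
    rintro w ⟨p, hp, rfl⟩
    exact weak_duality lam C d φ a γ θ β z π μ σ η τ ν hdf p hp
  -- dual optimum at zs
  obtain ⟨π, μ, σ, η, τ, ν, hdf, hopt, hπM⟩ := (hK zs hzsZ.1 hzsZ.2).2
  have hDle : Dobj lam C a θ β zs π μ σ η τ ν ≤ v := hweak zs hzsZ π μ σ η τ ν hdf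
  have hvle : v ≤ Dobj lam C a θ β zs π μ σ η τ ν := by
    obtain ⟨p, hp, hc⟩ := strong_dir lam C d φ a γ θ β hβ zs (hK zs hzsZ.1 hzsZ.2).1
      (Dobj lam C a θ β zs π μ σ η τ ν)
      (fun π' μ' σ' η' τ' ν' hdf' => hopt π' μ' σ' η' τ' ν' hdf')
    exact (csInf_le (hbdd zs hzsZ) ⟨p, hp, rfl⟩).trans hc
  have hveq : v = Dobj lam C a θ β zs π μ σ η τ ν := le_antisymm hvle hDle
  refine ⟨v, ⟨⟨zs, hzsZ.1, hzsZ.2, rfl⟩, ?_⟩, ⟨?_, ?_⟩⟩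
  · rintro w ⟨z, h1, h2, rfl⟩
    exact hzsmax z ⟨h1, h2⟩
  · -- v ∈ MILP set
    refine ⟨zs, fun j => (1 - zs j) * π j, π, μ, σ, η, τ, ν, hzsZ.1, hzsZ.2, hdf, ?_, ?_⟩
    · intro j
      rcases hzsZ.1 j with h0 | h1
      · refine ⟨?_, ?_, ?_, ?_⟩ <;> simp [h0]
        · exact hπM j
        · exact hdf.1 j
      · refine ⟨?_, ?_, ?_, ?_⟩ <;> simp [h1]
        · exact hdf.1 j
        · exact hπM j
    · rw [hveq]
      unfold Dobj
      have : ∑ j, C j * ((1 - zs j) * π j) = ∑ j, C j * (1 - zs j) * π j :=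
        Finset.sum_congr rfl fun j _ => by ring
      rw [this]
  · -- upper bound for MILP set
    rintro w ⟨z, g, π', μ', σ', η', τ', ν', h1, h2, hdf', hg, rfl⟩
    have hCg : ∀ j, C j * g j = C j * (1 - z j) * π' j := by
      intro j
      rcases h1 j with h0 | h1'
      · have hgj : g j = π' j := le_antisymm (hg j).2.1
          (by have := (hg j).2.2.2; simpa [h0] using this)
        rw [hgj, h0]; ring
      · have hgle : g j ≤ 0 := by have := (hg j).1; simpa [h1'] using this
        have hgj : g j = 0 := le_antisymm hgle (hg j).2.2.1
        rw [hgj, h1']; ring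
    have hobj : -(∑ j, C j * g j) + ∑ i, lam i * μ' i - ∑ i, ∑ j, C j * a i j * σ' i j
        - β * ∑ i, ∑ i' ∈ univ.filter (fun i' => i < i'), (η' i i' + τ' i i')
        - θ * ∑ i, ν' i = Dobj lam C a θ β z π' μ' σ' η' τ' ν' := by
      unfold Dobj
      rw [Finset.sum_congr rfl fun j (_ : j ∈ univ) => hCg j]
    rw [hobj]
    exact (hweak z ⟨h1, h2⟩ π' μ' σ' η' τ' ν' hdf').trans (hzsmax z ⟨h1, h2⟩)
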